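/- arXiv:2104.04838 — 7 statements merged into one kernel-verified Lean document; each statement's English description precedes it below -/
import Mathlib

section
/- Let X, Y be measurable spaces, c : X × Y → (-∞, ∞] measurable, and μ, ν probability measures on X, Y respectively. If for every measurable A ⊆ X one has μ(A) + ν({y : ∀ x ∈ A, c(x,y) = ∞}) ≤ 1, then for every measurable B ⊆ Y one has ν(B) + μ({x : ∀ y ∈ B, c(x,y) = ∞}) ≤ 1. That is, c-compatibility is a symmetric notion. -/
open MeasureTheory

/-- `c`-compatibility is a symmetric notion: if
`μ(A) + ν({y : ∀ x ∈ A, c(x,y) = ∞}) ≤ 1` for all measurable `A ⊆ X`, then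
`ν(B) + μ({x : ∀ y ∈ B, c(x,y) = ∞}) ≤ 1` for all measurable `B ⊆ Y`.
(The relevant "dual" sets are assumed measurable.) -/
theorem cCompatible_symm {X Y : Type*} [MeasurableSpace X] [MeasurableSpace Y]
    (c : X → Y → EReal) (hbot : ∀ x y, c x y ≠ ⊥)
    (hmeasY : ∀ A : Set X, MeasurableSet {y | ∀ x ∈ A, c x y = ⊤})
    (hmeasX : ∀ B : Set Y, MeasurableSet {x | ∀ y ∈ B, c x y = ⊤})
    (μ : Measure X) (ν : Measure Y) [IsProbabilityMeasure μ] [IsProbabilityMeasure ν]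
    (h : ∀ A : Set X, MeasurableSet A → μ A + ν {y | ∀ x ∈ A, c x y = ⊤} ≤ 1) :
    ∀ B : Set Y, MeasurableSet B → ν B + μ {x | ∀ y ∈ B, c x y = ⊤} ≤ 1 := by
  intro B hB
  set A : Set X := {x | ∀ y ∈ B, c x y = ⊤} with hA
  have hsub : B ⊆ {y | ∀ x ∈ A, c x y = ⊤} := fun y hy x hx => hx y hy
  calc ν B + μ A ≤ ν {y | ∀ x ∈ A, c x y = ⊤} + μ A :=
        add_le_add_left (measure_mono hsub) _
    _ = μ A + ν {y | ∀ x ∈ A, c x y = ⊤} := add_comm _ _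
    _ ≤ 1 := h A (hmeasX B)
end

section
/- Let c : X × Y → (-∞, ∞] be a symmetric cost function on a common space X = Y, with c-duality taken with t = ∞ (so K^c = {y : ∀ x ∈ K, c(x,y) = ∞}). Probability measures μ and ν are c-compatible if and only if for every set K with K = K^{cc} one has ν(K^c) ≤ 1 − μ(K). -/
open MeasureTheory

/-- The `c`-dual at threshold `t = ∞` of a set `K`: `K^c = {y : ∀ x ∈ K, c(x,y) = ∞}`. -/
def cDualInf {X : Type*} (c : X → X → EReal) (K : Set X) : Set X :=
  {y | ∀ x ∈ K, c x y = ⊤}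

lemma subset_cDualInf_cDualInf {X : Type*} (c : X → X → EReal)
    (hsymm : ∀ x y, c x y = c y x) (A : Set X) : A ⊆ cDualInf c (cDualInf c A) := by
  intro x hx y hy
  rw [hsymm]
  exact hy x hx

lemma cDualInf_anti {X : Type*} (c : X → X → EReal) {A B : Set X} (h : A ⊆ B) :
    cDualInf c B ⊆ cDualInf c A := fun y hy x hx => hy x (h hx)

lemma cDualInf_triple {X : Type*} (c : X → X → EReal)
    (hsymm : ∀ x y, c x y = c y x) (A : Set X) :
    cDualInf c (cDualInf c (cDualInf c A)) = cDualInf c A :=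
  Set.Subset.antisymm (cDualInf_anti c (subset_cDualInf_cDualInf c hsymm A))
    (subset_cDualInf_cDualInf c hsymm _)

/-- for a symmetric cost on `X = Y`, probability measures `μ, ν` are
`c`-compatible iff for every `c`-class set `K` (i.e. `K = K^{cc}`) one has
`ν(K^c) ≤ 1 − μ(K)`. -/
theorem cCompatible_iff_cClass_sets {X : Type*} [MeasurableSpace X]
    (c : X → X → EReal) (hbot : ∀ x y, c x y ≠ ⊥) (hsymm : ∀ x y, c x y = c y x)
    (μ ν : Measure X) [IsProbabilityMeasure μ] [IsProbabilityMeasure ν] :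
    (∀ A : Set X, μ A + ν (cDualInf c A) ≤ 1) ↔
      (∀ K : Set X, cDualInf c (cDualInf c K) = K → ν (cDualInf c K) ≤ 1 - μ K) := by
  constructor
  · intro h K _
    exact ((ENNReal.cancel_of_ne (ne_of_lt (lt_of_le_of_lt prob_le_one ENNReal.one_lt_top))).le_tsub_iff_left prob_le_one).mpr (h K)
  · intro h A
    have hK := h (cDualInf c (cDualInf c A)) (cDualInf_triple c hsymm _)
    rw [cDualInf_triple c hsymm A] at hK
    calc μ A + ν (cDualInf c A)
        ≤ μ (cDualInf c (cDualInf c A)) + ν (cDualInf c A) :=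
          add_le_add_left (measure_mono (subset_cDualInf_cDualInf c hsymm A)) _
      _ ≤ 1 := ((ENNReal.cancel_of_ne (ne_of_lt (lt_of_le_of_lt prob_le_one ENNReal.one_lt_top))).le_tsub_iff_left prob_le_one).mp hK
end

section
/- Let X be a measure space, Y a finite set {u_1, ..., u_m}, c : X × Y → (-∞, ∞] measurable, and μ a probability measure on X supported on {x : ∃ i, c(x, u_i) < ∞}. For I ⊆ [m] let A_I = {x ∈ X : ∃ i ∈ I, c(x, u_i) < ∞}, and define the Hall polytope P = {α ∈ Δ_m : for all I ⊆ [m], Σ_{i∈I} α_i ≤ μ(A_I)}, where Δ_m is the standard simplex. Then for any α ∈ Δ_m, the discrete measure ν = Σ α_i δ_{u_i} is c-compatible with μ if and only if α ∈ P. -/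
open MeasureTheory

/-- The set `A_I = {x : ∃ i ∈ I, c(x,u_i) < ∞}` (the target space is identified with `Fin m`). -/
def hallSet {X : Type*} {m : ℕ} (c : X → Fin m → EReal) (I : Finset (Fin m)) : Set X :=
  {x | ∃ i ∈ I, c x i ≠ ⊤}

/-- The discrete measure `ν = Σ α_i δ_{u_i}` on `Fin m`. -/
noncomputable def discreteMeasure {m : ℕ} (α : Fin m → ℝ) : Measure (Fin m) :=
  ∑ i, ENNReal.ofReal (α i) • Measure.dirac i

lemma dm_apply {m : ℕ} (α : Fin m → ℝ) (S : Set (Fin m)) (I : Finset (Fin m))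
    (hIS : ∀ i, i ∈ I ↔ i ∈ S) :
    discreteMeasure α S = ∑ i ∈ I, ENNReal.ofReal (α i) := by
  classical
  rw [discreteMeasure, Measure.finset_sum_apply,
    show I = Finset.univ.filter (· ∈ S) from by ext i; simp [← hIS i], Finset.sum_filter]
  refine Finset.sum_congr rfl fun i _ => ?_
  by_cases hi : i ∈ S <;> simp [Measure.smul_apply, Measure.dirac_apply, hi]

lemma hallSet_meas {X : Type*} [MeasurableSpace X] {m : ℕ} (c : X → Fin m → EReal)
    (hA : ∀ i : Fin m, MeasurableSet {x | c x i ≠ ⊤}) (I : Finset (Fin m)) :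
    MeasurableSet (hallSet c I) := by
  have : hallSet c I = ⋃ i ∈ I, {x | c x i ≠ ⊤} := by ext x; simp [hallSet]
  rw [this]
  exact MeasurableSet.biUnion I.countable_toSet fun i _ => hA i

/-- with `μ` supported on `{x : ∃ i, c(x,u_i) < ∞}`, the discrete measure
`ν = Σ α_i δ_{u_i}` is `c`-compatible with `μ` iff `α` belongs to the Hall polytope,
i.e. `Σ_{i∈I} α_i ≤ μ(A_I)` for all `I ⊆ [m]`. -/
theorem cCompatible_iff_mem_hallPolytope {X : Type*} [MeasurableSpace X] {m : ℕ}
    (c : X → Fin m → EReal) (hbot : ∀ x i, c x i ≠ ⊥)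
    (hA : ∀ i : Fin m, MeasurableSet {x | c x i ≠ ⊤})
    (μ : Measure X) [IsProbabilityMeasure μ]
    (hsupp : μ {x | ∀ i, c x i = ⊤} = 0)
    (α : Fin m → ℝ) (hα0 : ∀ i, 0 ≤ α i) (hα1 : ∑ i, α i = 1) :
    (∀ A : Set X, MeasurableSet A →
        μ A + discreteMeasure α {i | ∀ x ∈ A, c x i = ⊤} ≤ 1) ↔
      (∀ I : Finset (Fin m), ∑ i ∈ I, α i ≤ (μ (hallSet c I)).toReal) := by
  have hfin : ∀ s : Set X, μ s ≠ ⊤ := fun s => measure_ne_top μ s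
  constructor
  · intro h I
    have key := h (hallSet c I)ᶜ (hallSet_meas c hA I).compl
    have hsub : (↑I : Set (Fin m)) ⊆ {i | ∀ x ∈ (hallSet c I)ᶜ, c x i = ⊤} := by
      intro i hi x hx
      by_contra hne
      exact hx ⟨i, by simpa using hi, hne⟩
    have hI : discreteMeasure α (↑I : Set (Fin m)) = ENNReal.ofReal (∑ i ∈ I, α i) := by
      rw [dm_apply α _ I (fun i => by simp), ENNReal.ofReal_sum_of_nonneg (fun i _ => hα0 i)]
    have hle : μ (hallSet c I)ᶜ + ENNReal.ofReal (∑ i ∈ I, α i) ≤ 1 := by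
      rw [← hI]
      exact le_trans (add_le_add_right (measure_mono hsub) _) key
    have hcompl : μ (hallSet c I) + μ (hallSet c I)ᶜ = 1 := by
      rw [measure_add_measure_compl (hallSet_meas c hA I), measure_univ]
    have hm : μ (hallSet c I) = 1 - μ (hallSet c I)ᶜ :=
      ENNReal.eq_sub_of_add_eq (hfin _) hcompl
    have h2 : ENNReal.ofReal (∑ i ∈ I, α i) ≤ μ (hallSet c I) := by
      rw [hm]
      exact ENNReal.le_sub_of_add_le_left (hfin _) hle
    exact (ENNReal.ofReal_le_iff_le_toReal (hfin _)).mp h2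
  · intro h A hAm
    classical
    set I : Finset (Fin m) := Finset.univ.filter (fun i => ∀ x ∈ A, c x i = ⊤) with hIdef
    have hS : discreteMeasure α {i | ∀ x ∈ A, c x i = ⊤} = ENNReal.ofReal (∑ i ∈ I, α i) := by
      rw [dm_apply α _ I (fun i => by simp [hIdef]),
        ENNReal.ofReal_sum_of_nonneg (fun i _ => hα0 i)]
    have hdisj : A ⊆ (hallSet c I)ᶜ := by
      intro x hx hxh
      obtain ⟨i, hiI, hne⟩ := hxh
      rw [hIdef, Finset.mem_filter] at hiI
      exact hne (hiI.2 x hx)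
    have hle2 : ENNReal.ofReal (∑ i ∈ I, α i) ≤ μ (hallSet c I) := by
      rw [ENNReal.ofReal_le_iff_le_toReal (hfin _)]
      exact h I
    rw [hS]
    calc μ A + ENNReal.ofReal (∑ i ∈ I, α i)
        ≤ μ (hallSet c I)ᶜ + μ (hallSet c I) := add_le_add (measure_mono hdisj) hle2
      _ = 1 := by rw [add_comm, measure_add_measure_compl (hallSet_meas c hA I), measure_univ]
end

section
/- With the Hall polytope P = P((u_i)_{i=1}^m, μ) as above, for each I ⊆ [m] the face F_I = {α ∈ P : Σ_{i∈I} α_i = μ(A_I)} splits as a product: F_I equals the set of α ∈ Δ_m whose restriction to coordinates in I lies in μ(A_I)·P_I and whose restriction to coordinates in [m]\I lies in μ(X\A_I)·P̂_I, where P_I is the Hall polytope associated with the vectors (u_i)_{i∈I} and the normalized restricted measure μ(A_I)^{-1} μ|_{A_I}, and P̂_I is the Hall polytope associated with (u_i)_{i∈[m]\I} and μ(X\A_I)^{-1} μ|_{X\A_I}. (If μ(A_I) = 0 then P_I = {0}, and similarly for the complement.) -/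
open MeasureTheory

private lemma hallSet_measurable' {X : Type*} [MeasurableSpace X] {m : ℕ}
    (c : X → Fin m → EReal) (hA : ∀ i : Fin m, MeasurableSet {x | c x i ≠ ⊤})
    (J : Finset (Fin m)) :
    MeasurableSet {x | ∃ i ∈ J, c x i ≠ ⊤} := by
  have : {x | ∃ i ∈ J, c x i ≠ ⊤} = ⋃ i ∈ J, {x | c x i ≠ ⊤} := by
    ext x; simp
  rw [this]
  exact J.measurableSet_biUnion (fun i _ => hA i)

private lemma hallSet_mono' {X : Type*} {m : ℕ} (c : X → Fin m → EReal)
    {J K : Finset (Fin m)} (h : J ⊆ K) : hallSet c J ⊆ hallSet c K := by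
  rintro x ⟨i, hi, hx⟩; exact ⟨i, h hi, hx⟩

private lemma hallSet_union' {X : Type*} {m : ℕ} (c : X → Fin m → EReal)
    (J K : Finset (Fin m)) : hallSet c (J ∪ K) = hallSet c J ∪ hallSet c K := by
  ext x
  constructor
  · rintro ⟨i, hi, hx⟩
    rcases Finset.mem_union.mp hi with h | h
    · exact Or.inl ⟨i, h, hx⟩
    · exact Or.inr ⟨i, h, hx⟩
  · rintro (⟨i, hi, hx⟩ | ⟨i, hi, hx⟩)
    · exact ⟨i, Finset.mem_union_left _ hi, hx⟩
    · exact ⟨i, Finset.mem_union_right _ hi, hx⟩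

private lemma toReal_union_disj {X : Type*} [MeasurableSpace X] (μ : Measure X)
    [IsFiniteMeasure μ] {s t : Set X} (hd : Disjoint s t) (ht : MeasurableSet t) :
    (μ (s ∪ t)).toReal = (μ s).toReal + (μ t).toReal := by
  rw [measure_union hd ht, ENNReal.toReal_add (measure_ne_top μ s) (measure_ne_top μ t)]

/-- the face `F_I = {α ∈ P : Σ_{i∈I} α_i = μ(A_I)}` of the Hall polytope
splits as a product: it equals the set of `α` in the simplex whose `I`-block satisfies the
(scaled) Hall-polytope constraints of the normalized restriction `μ(A_I)⁻¹ μ|_{A_I}`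
(i.e. `Σ_{i∈J} α_i ≤ μ|_{A_I}(A_J)` for `J ⊆ I`, with block sum `μ(A_I)`), and whose
complementary block satisfies the Hall-polytope constraints of `μ(X\A_I)⁻¹ μ|_{X\A_I}`
(i.e. `Σ_{i∈K} α_i ≤ μ|_{X\A_I}(A_K)` for `K ⊆ Iᶜ`, with block sum `μ(X\A_I)`). -/
theorem hallPolytope_face_splitting {X : Type*} [MeasurableSpace X] {m : ℕ}
    (c : X → Fin m → EReal) (hbot : ∀ x i, c x i ≠ ⊥)
    (hA : ∀ i : Fin m, MeasurableSet {x | c x i ≠ ⊤})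
    (μ : Measure X) [IsProbabilityMeasure μ]
    (hsupp : μ {x | ∀ i, c x i = ⊤} = 0)
    (I : Finset (Fin m)) :
    {α : Fin m → ℝ |
        (∀ i, 0 ≤ α i) ∧ (∑ i, α i = 1) ∧
        (∀ J : Finset (Fin m), ∑ i ∈ J, α i ≤ (μ (hallSet c J)).toReal) ∧
        ∑ i ∈ I, α i = (μ (hallSet c I)).toReal} =
      {α : Fin m → ℝ |
        (∀ i, 0 ≤ α i) ∧
        (∑ i ∈ I, α i = (μ (hallSet c I)).toReal) ∧
        (∑ i ∈ Iᶜ, α i = (μ (hallSet c I)ᶜ).toReal) ∧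
        (∀ J : Finset (Fin m), J ⊆ I →
          ∑ i ∈ J, α i ≤ (μ.restrict (hallSet c I) (hallSet c J)).toReal) ∧
        (∀ K : Finset (Fin m), K ⊆ Iᶜ →
          ∑ i ∈ K, α i ≤ (μ.restrict (hallSet c I)ᶜ (hallSet c K)).toReal)} := by
  have hM : ∀ J : Finset (Fin m), MeasurableSet (hallSet c J) :=
    fun J => hallSet_measurable' c hA J
  have hres1 : ∀ J : Finset (Fin m),
      μ.restrict (hallSet c I) (hallSet c J) = μ (hallSet c J ∩ hallSet c I) :=
    fun J => Measure.restrict_apply (hM J)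
  have hres2 : ∀ J : Finset (Fin m),
      μ.restrict (hallSet c I)ᶜ (hallSet c J) = μ (hallSet c J ∩ (hallSet c I)ᶜ) :=
    fun J => Measure.restrict_apply (hM J)
  have hadd : (μ (hallSet c I)).toReal + (μ (hallSet c I)ᶜ).toReal = 1 := by
    rw [← ENNReal.toReal_add (measure_ne_top μ _) (measure_ne_top μ _),
      measure_add_measure_compl (hM I)]
    simp
  ext α
  simp only [Set.mem_setOf_eq]
  constructor
  · rintro ⟨h0, h1, h2, h3⟩
    refine ⟨h0, h3, ?_, ?_, ?_⟩
    · linarith [Finset.sum_add_sum_compl I α]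
    · intro J hJ
      rw [hres1, Set.inter_eq_left.mpr (hallSet_mono' c hJ)]
      exact h2 J
    · intro K hK
      rw [hres2]
      have hdisj : Disjoint K I := Finset.disjoint_left.mpr
        (fun i hi => Finset.mem_compl.mp (hK hi))
      have hsum : ∑ i ∈ K ∪ I, α i = ∑ i ∈ K, α i + ∑ i ∈ I, α i :=
        Finset.sum_union hdisj
      have h2' := h2 (K ∪ I)
      rw [hallSet_union'] at h2'
      have hset : hallSet c K ∪ hallSet c I =
          (hallSet c K ∩ (hallSet c I)ᶜ) ∪ hallSet c I := by
        rw [← Set.diff_eq, Set.diff_union_self]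
      have hdis : Disjoint (hallSet c K ∩ (hallSet c I)ᶜ) (hallSet c I) :=
        disjoint_compl_left.mono_left Set.inter_subset_right
      have hμ := toReal_union_disj μ hdis (hM I)
      rw [← hset] at hμ
      linarith
  · rintro ⟨h0, hI, hIc, hJle, hKle⟩
    refine ⟨h0, ?_, ?_, hI⟩
    · linarith [Finset.sum_add_sum_compl I α]
    · intro J
      have hsplit : ∑ i ∈ J ∩ I, α i + ∑ i ∈ J \ I, α i = ∑ i ∈ J, α i :=
        Finset.sum_inter_add_sum_sdiff J I α
      have t1 := hJle (J ∩ I) Finset.inter_subset_right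
      have t2 := hKle (J \ I) (fun i hi =>
        Finset.mem_compl.mpr (Finset.mem_sdiff.mp hi).2)
      rw [hres1] at t1
      rw [hres2] at t2
      have m1 : (μ (hallSet c (J ∩ I) ∩ hallSet c I)).toReal ≤
          (μ (hallSet c J ∩ hallSet c I)).toReal :=
        ENNReal.toReal_mono (measure_ne_top μ _) (measure_mono
          (Set.inter_subset_inter_left _ (hallSet_mono' c Finset.inter_subset_left)))
      have m2 : (μ (hallSet c (J \ I) ∩ (hallSet c I)ᶜ)).toReal ≤
          (μ (hallSet c J ∩ (hallSet c I)ᶜ)).toReal :=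
        ENNReal.toReal_mono (measure_ne_top μ _) (measure_mono
          (Set.inter_subset_inter_left _ (hallSet_mono' c Finset.sdiff_subset)))
      have hdis : Disjoint (hallSet c J ∩ hallSet c I) (hallSet c J ∩ (hallSet c I)ᶜ) :=
        disjoint_compl_right.mono Set.inter_subset_right Set.inter_subset_right
      have hμ := toReal_union_disj μ hdis ((hM J).inter (hM I).compl)
      rw [Set.inter_union_compl] at hμ
      linarith
end

section
/- Let μ be a probability measure on X supported on {x : ∃ i, c(x,u_i) < ∞}, non-degenerate with respect to (u_i)_{i=1}^m (each pairwise intersection of finiteness sets has positive measure). If I, J ⊆ [m] are nonempty and disjoint, then the faces F_I = {α ∈ P : Σ_{i∈I} α_i = μ(A_I)} and F_J of the Hall polytope P do not intersect. -/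
open MeasureTheory

/-- The Hall polytope `P = {α ∈ Δ_m : ∀ I, Σ_{i∈I} α_i ≤ μ(A_I)}`. -/
def hallPolytope {X : Type*} [MeasurableSpace X] {m : ℕ} (c : X → Fin m → EReal)
    (μ : Measure X) : Set (Fin m → ℝ) :=
  {α | (∀ i, 0 ≤ α i) ∧ (∑ i, α i = 1) ∧
    ∀ I : Finset (Fin m), ∑ i ∈ I, α i ≤ (μ (hallSet c I)).toReal}

/-- if `μ` is non-degenerate with respect to `(u_i)` and `I, J` are nonempty
and disjoint, then the faces `F_I` and `F_J` of the Hall polytope do not intersect. -/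
theorem hallPolytope_disjoint_faces {X : Type*} [MeasurableSpace X] {m : ℕ}
    (c : X → Fin m → EReal) (hbot : ∀ x i, c x i ≠ ⊥)
    (hA : ∀ i : Fin m, MeasurableSet {x | c x i ≠ ⊤})
    (μ : Measure X) [IsProbabilityMeasure μ]
    (hsupp : μ {x | ∀ i, c x i = ⊤} = 0)
    (hnd : ∀ i j : Fin m, i ≠ j → 0 < μ ({x | c x i ≠ ⊤} ∩ {x | c x j ≠ ⊤}))
    (I J : Finset (Fin m)) (hI : I.Nonempty) (hJ : J.Nonempty) (hdisj : Disjoint I J) :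
    {α ∈ hallPolytope c μ | ∑ i ∈ I, α i = (μ (hallSet c I)).toReal} ∩
      {α ∈ hallPolytope c μ | ∑ i ∈ J, α i = (μ (hallSet c J)).toReal} = ∅ := by
  ext α
  simp only [Set.mem_inter_iff, Set.mem_sep_iff, Set.mem_empty_iff_false, iff_false]
  rintro ⟨⟨hα, hIeq⟩, ⟨-, hJeq⟩⟩
  obtain ⟨i, hi⟩ := hI
  obtain ⟨j, hj⟩ := hJ
  have hij : i ≠ j := fun h => Finset.disjoint_left.mp hdisj hi (h ▸ hj)
  have hm : ∀ K : Finset (Fin m), MeasurableSet (hallSet c K) := by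
    intro K
    have : hallSet c K = ⋃ k ∈ K, {x | c x k ≠ ⊤} := by
      ext x; simp [hallSet]
    rw [this]; exact K.measurableSet_biUnion fun k _ => hA k
  have hunion : hallSet c (I ∪ J) = hallSet c I ∪ hallSet c J := by
    ext x
    simp only [hallSet, Finset.mem_union, Set.mem_setOf_eq, Set.mem_union]
    constructor
    · rintro ⟨k, hk | hk, hck⟩
      · exact Or.inl ⟨k, hk, hck⟩
      · exact Or.inr ⟨k, hk, hck⟩
    · rintro (⟨k, hk, hck⟩ | ⟨k, hk, hck⟩)
      · exact ⟨k, Or.inl hk, hck⟩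
      · exact ⟨k, Or.inr hk, hck⟩
  have hle := hα.2.2 (I ∪ J)
  rw [Finset.sum_union hdisj, hIeq, hJeq, hunion] at hle
  have hfin : ∀ s : Set X, μ s ≠ ⊤ := fun s => measure_ne_top μ s
  have hadd : μ (hallSet c I ∪ hallSet c J) + μ (hallSet c I ∩ hallSet c J)
      = μ (hallSet c I) + μ (hallSet c J) := measure_union_add_inter _ (hm J)
  have h1 : (μ (hallSet c I)).toReal + (μ (hallSet c J)).toReal
      = (μ (hallSet c I ∪ hallSet c J)).toReal + (μ (hallSet c I ∩ hallSet c J)).toReal := by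
    rw [← ENNReal.toReal_add (hfin _) (hfin _), ← hadd,
      ENNReal.toReal_add (hfin _) (hfin _)]
  have hpos : 0 < μ (hallSet c I ∩ hallSet c J) := by
    refine lt_of_lt_of_le (hnd i j hij) (measure_mono ?_)
    rintro x ⟨h1, h2⟩
    exact ⟨⟨i, hi, h1⟩, ⟨j, hj, h2⟩⟩
  have h2 : 0 < (μ (hallSet c I ∩ hallSet c J)).toReal :=
    ENNReal.toReal_pos hpos.ne' (hfin _)
  linarith
end

section
/- Let φ : ℝ^n → [0, ∞] be a lower semi-continuous convex function with φ(0) = 0, and define the polarity transform Aφ(y) = sup{(⟨x,y⟩ − 1)/φ(x) : ⟨x,y⟩ > 1} and the polar subgradient ∂°φ = {(x,y) : φ(x)·Aφ(y) = ⟨x,y⟩ − 1 > 0}. Let x satisfy 0 < φ(x) < ∞. Then for any z in the classical subdifferential ∂φ(x) with ⟨x,z⟩ ≠ φ(x), the point y = z / (⟨x,z⟩ − φ(x)) belongs to ∂°φ(x). -/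
open scoped RealInnerProductSpace

/-- The polarity transform `Aφ(y) = sup{(⟨w,y⟩ − 1)/φ(w) : ⟨w,y⟩ > 1}`, with the
conventions that the supremum over the empty set is `0` and that a point with
`φ(w) = 0` (and `⟨w,y⟩ > 1`) contributes `+∞`. -/
noncomputable def polarTransform {n : ℕ} (φ : EuclideanSpace ℝ (Fin n) → EReal)
    (y : EuclideanSpace ℝ (Fin n)) : EReal :=
  ⨆ w, if 1 < ⟪w, y⟫ then
    (if φ w = 0 then ⊤ else ((⟪w, y⟫ - 1 : ℝ) : EReal) / φ w) else 0

/-- for `φ ∈ Cvx₀(ℝⁿ)` and `x` with `0 < φ(x) < ∞`, if `z ∈ ∂φ(x)`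
(classical subdifferential) with `⟨x,z⟩ ≠ φ(x)`, then `y = z/(⟨x,z⟩ − φ(x))` belongs to
the polar subgradient `∂°φ(x) = {y : φ(x)·Aφ(y) = ⟨x,y⟩ − 1 > 0}`. -/
theorem polar_subgradient_of_subgradient {n : ℕ}
    (φ : EuclideanSpace ℝ (Fin n) → EReal)
    (hpos : ∀ w, 0 ≤ φ w) (h0 : φ 0 = 0)
    (hlsc : LowerSemicontinuous φ)
    (hconv : ∀ (u v : EuclideanSpace ℝ (Fin n)) (a b : ℝ), 0 ≤ a → 0 ≤ b → a + b = 1 →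
      φ (a • u + b • v) ≤ (a : EReal) * φ u + (b : EReal) * φ v)
    (x z : EuclideanSpace ℝ (Fin n)) (hφx : 0 < φ x) (hφx' : φ x ≠ ⊤)
    (hz : ∀ w, φ x + ((⟪w - x, z⟫ : ℝ) : EReal) ≤ φ w)
    (hne : ((⟪x, z⟫ : ℝ) : EReal) ≠ φ x)
    (y : EuclideanSpace ℝ (Fin n)) (hy : y = (⟪x, z⟫ - (φ x).toReal)⁻¹ • z) :
    φ x * polarTransform φ y = ((⟪x, y⟫ - 1 : ℝ) : EReal) ∧ 1 < ⟪x, y⟫ := by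
  set c : ℝ := (φ x).toReal with hc
  have hφx_ne_bot : φ x ≠ ⊥ := ne_bot_of_le_ne_bot (by simp) (hpos x)
  have hφxc : φ x = (c : EReal) := (EReal.coe_toReal hφx' hφx_ne_bot).symm
  have hcpos : 0 < c := by
    have := hφx
    rw [hφxc] at this
    exact_mod_cast this
  set t : ℝ := ⟪x, z⟫ - c with ht
  -- t > 0
  have hcle : c ≤ ⟪x, z⟫ := by
    have h := hz 0
    rw [h0, hφxc] at h
    have hin : ⟪(0 : EuclideanSpace ℝ (Fin n)) - x, z⟫ = -⟪x, z⟫ := by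
      rw [zero_sub, inner_neg_left]
    rw [hin] at h
    have h' : ((c + -⟪x, z⟫ : ℝ) : EReal) ≤ (0 : EReal) := by
      rw [EReal.coe_add]; exact_mod_cast h
    have : c + -⟪x, z⟫ ≤ (0 : ℝ) := by exact_mod_cast h'
    linarith
  have htpos : 0 < t := by
    rcases lt_or_eq_of_le hcle with h | h
    · simpa [ht] using sub_pos.mpr h
    · exact absurd (by rw [← h, hφxc]) hne
  have htne : t ≠ 0 := ne_of_gt htpos
  have hzy : z = t • y := by
    rw [hy, smul_smul, mul_inv_cancel₀ htne, one_smul]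
  -- inner products
  have hwy : ∀ w : EuclideanSpace ℝ (Fin n), ⟪w, z⟫ = t * ⟪w, y⟫ := by
    intro w; rw [hzy, inner_smul_right]
  have hty : t * ⟪x, y⟫ = t + c := by
    rw [← hwy x, ht]; ring
  have hxy : ⟪x, y⟫ = 1 + c / t := by
    have h1 : 1 + c / t = (t + c) / t := by field_simp
    rw [h1, eq_div_iff htne, mul_comm]
    exact hty
  have hxy1 : 1 < ⟪x, y⟫ := by
    rw [hxy]; nlinarith [div_pos hcpos htpos]
  -- key subgradient inequality rewritten
  have hkey : ∀ w : EuclideanSpace ℝ (Fin n),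
      ((t * (⟪w, y⟫ - 1) : ℝ) : EReal) ≤ φ w := by
    intro w
    have h := hz w
    rw [hφxc] at h
    have hin : ⟪w - x, z⟫ = ⟪w, z⟫ - ⟪x, z⟫ := by rw [inner_sub_left]
    have : ((c + (⟪w, z⟫ - ⟪x, z⟫) : ℝ) : EReal) ≤ φ w := by
      rw [EReal.coe_add]; rw [hin] at h; exact_mod_cast h
    have heq : c + (⟪w, z⟫ - ⟪x, z⟫) = t * (⟪w, y⟫ - 1) := by
      rw [hwy w, hwy x]
      linarith [hty]
    rwa [heq] at this
  -- compute the value of the sup : it equals ↑(1/t)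
  have hA : polarTransform φ y = ((1 / t : ℝ) : EReal) := by
    unfold polarTransform
    apply le_antisymm
    · apply iSup_le
      intro w
      by_cases hw : 1 < ⟪w, y⟫
      · have hlow : ((t * (⟪w, y⟫ - 1) : ℝ) : EReal) ≤ φ w := hkey w
        have hposreal : (0 : ℝ) < t * (⟪w, y⟫ - 1) := by nlinarith
        have hφw0 : φ w ≠ 0 := by
          intro h
          rw [h] at hlow
          exact absurd (by exact_mod_cast hlow) (not_le.mpr hposreal)
        rw [if_pos hw, if_neg hφw0]
        by_cases hwt : φ w = ⊤
        · rw [hwt, EReal.div_top]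
          have : (0 : ℝ) ≤ 1 / t := by positivity
          exact_mod_cast this
        · have hwbot : φ w ≠ ⊥ := ne_bot_of_le_ne_bot (by simp) (hpos w)
          set r : ℝ := (φ w).toReal with hr
          have hφwr : φ w = (r : EReal) := (EReal.coe_toReal hwt hwbot).symm
          have hrge : t * (⟪w, y⟫ - 1) ≤ r := by
            rw [hφwr] at hlow; exact_mod_cast hlow
          have hrpos : 0 < r := lt_of_lt_of_le hposreal hrge
          rw [hφwr, ← EReal.coe_div]
          have : (⟪w, y⟫ - 1) / r ≤ 1 / t := by
            rw [div_le_div_iff₀ hrpos htpos]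
            nlinarith
          exact_mod_cast this
      · rw [if_neg hw]
        have : (0 : ℝ) ≤ 1 / t := by positivity
        exact_mod_cast this
    · have hx' : (if 1 < ⟪x, y⟫ then
          (if φ x = 0 then (⊤ : EReal) else ((⟪x, y⟫ - 1 : ℝ) : EReal) / φ x) else 0)
          = ((1 / t : ℝ) : EReal) := by
        rw [if_pos hxy1, if_neg (ne_of_gt hφx), hφxc, ← EReal.coe_div]
        congr 1
        rw [hxy]
        field_simp
        ring
      calc ((1 / t : ℝ) : EReal) = _ := hx'.symm
        _ ≤ _ := le_iSup (fun w => if 1 < ⟪w, y⟫ then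
            (if φ w = 0 then (⊤ : EReal) else ((⟪w, y⟫ - 1 : ℝ) : EReal) / φ w) else 0) x
  constructor
  · rw [hA, hφxc, ← EReal.coe_mul]
    congr 1
    rw [hxy]
    field_simp
    ring
  · exact hxy1
end

section
/- Let φ ∈ Cvx_0(ℝ^n) and x with 0 < φ(x) < ∞. For any y ∈ ∂°φ(x) (so φ(x)·Aφ(y) = ⟨x,y⟩ − 1 > 0), the point z = y·φ(x)/(⟨x,y⟩ − 1) belongs to the classical subdifferential ∂φ(x), satisfies ⟨x,z⟩ ≠ φ(x), and y = z/(⟨x,z⟩ − φ(x)). -/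
open scoped RealInnerProductSpace

/-- for `φ ∈ Cvx₀(ℝⁿ)`, `x` with `0 < φ(x) < ∞`, and any `y ∈ ∂°φ(x)`
(i.e. `φ(x)·Aφ(y) = ⟨x,y⟩ − 1 > 0`), the point `z = y·φ(x)/(⟨x,y⟩ − 1)` belongs to the
classical subdifferential `∂φ(x)`, satisfies `⟨x,z⟩ ≠ φ(x)`, and `y = z/(⟨x,z⟩ − φ(x))`. -/
theorem subgradient_of_polar_subgradient {n : ℕ}
    (φ : EuclideanSpace ℝ (Fin n) → EReal)
    (hpos : ∀ w, 0 ≤ φ w) (h0 : φ 0 = 0)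
    (hlsc : LowerSemicontinuous φ)
    (hconv : ∀ (u v : EuclideanSpace ℝ (Fin n)) (a b : ℝ), 0 ≤ a → 0 ≤ b → a + b = 1 →
      φ (a • u + b • v) ≤ (a : EReal) * φ u + (b : EReal) * φ v)
    (x y : EuclideanSpace ℝ (Fin n)) (hφx : 0 < φ x) (hφx' : φ x ≠ ⊤)
    (hmem : φ x * polarTransform φ y = ((⟪x, y⟫ - 1 : ℝ) : EReal) ∧ 1 < ⟪x, y⟫)
    (z : EuclideanSpace ℝ (Fin n)) (hzdef : z = ((φ x).toReal / (⟪x, y⟫ - 1)) • y) :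
    (∀ w, φ x + ((⟪w - x, z⟫ : ℝ) : EReal) ≤ φ w) ∧
      ((⟪x, z⟫ : ℝ) : EReal) ≠ φ x ∧
      y = (⟪x, z⟫ - (φ x).toReal)⁻¹ • z := by
  obtain ⟨heq, hxy⟩ := hmem
  set c : ℝ := (φ x).toReal with hc
  have hφxne : φ x ≠ ⊥ := (EReal.bot_lt_zero.trans hφx).ne'
  have hφxc : φ x = (c : EReal) := (EReal.coe_toReal hφx' hφxne).symm
  have hcpos : 0 < c := by exact_mod_cast hφxc ▸ hφx
  set s : ℝ := ⟪x, y⟫ - 1 with hsdef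
  have hspos : 0 < s := sub_pos.2 hxy
  -- term function
  set f : EuclideanSpace ℝ (Fin n) → EReal := fun w =>
    if 1 < ⟪w, y⟫ then (if φ w = 0 then ⊤ else ((⟪w, y⟫ - 1 : ℝ) : EReal) / φ w) else 0 with hf
  have hA : polarTransform φ y = ⨆ w, f w := rfl
  have hAnonneg : (0 : EReal) ≤ polarTransform φ y := by
    rw [hA]
    refine le_trans ?_ (le_iSup f 0)
    simp only [hf]
    norm_num [inner_zero_left]
  have hAtop : polarTransform φ y ≠ ⊤ := by
    intro h
    rw [h, hφxc] at heq
    rw [EReal.coe_mul_top_of_pos (by exact_mod_cast hcpos)] at heq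
    exact (EReal.top_ne_coe _) heq
  have hAbot : polarTransform φ y ≠ ⊥ := ne_bot_of_le_ne_bot (by simp) hAnonneg
  set a : ℝ := (polarTransform φ y).toReal with ha
  have hAa : polarTransform φ y = (a : EReal) := (EReal.coe_toReal hAtop hAbot).symm
  have hca : a * c = s := by
    rw [hφxc, hAa, ← EReal.coe_mul] at heq
    rw [mul_comm]; exact_mod_cast heq
  have haval : a = s / c := by rw [eq_div_iff hcpos.ne']; exact hca
  -- key inequality
  have key : ∀ w, ((c / s * (⟪w, y⟫ - 1) : ℝ) : EReal) ≤ φ w := by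
    intro w
    by_cases hw : 1 < ⟪w, y⟫
    · have hle : f w ≤ (a : EReal) := hAa ▸ (hA ▸ le_iSup f w)
      rw [hf] at hle
      simp only [if_pos hw] at hle
      by_cases h0w : φ w = 0
      · rw [if_pos h0w] at hle
        exact absurd hle (by simp)
      · rw [if_neg h0w] at hle
        have hwpos : 0 < φ w := (hpos w).lt_of_ne' h0w
        by_cases hwt : φ w = ⊤
        · rw [hwt]; exact le_top
        · have hwbot : φ w ≠ ⊥ := (EReal.bot_lt_zero.trans hwpos).ne'
          set p : ℝ := (φ w).toReal with hp
          have hφwp' : φ w = (p : EReal) := (EReal.coe_toReal hwt hwbot).symm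
          have hppos : 0 < p := by exact_mod_cast hφwp' ▸ hwpos
          have hφwp : φ w = (p : EReal) := (EReal.coe_toReal hwt hwbot).symm
          rw [hφwp, ← EReal.coe_div] at hle
          have hreal : (⟪w, y⟫ - 1) / p ≤ a := by exact_mod_cast hle
          rw [hφwp]
          have : c / s * (⟪w, y⟫ - 1) ≤ p := by
            rw [haval] at hreal
            rw [div_le_iff₀ hppos] at hreal
            rw [div_mul_eq_mul_div, div_le_iff₀ hspos]
            calc c * (⟪w, y⟫ - 1) ≤ c * (s / c * p) := by
                  nlinarith
              _ = p * s := by field_simp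
          exact_mod_cast this
    · push_neg at hw
      refine le_trans ?_ (hpos w)
      have : c / s * (⟪w, y⟫ - 1) ≤ 0 :=
        mul_nonpos_of_nonneg_of_nonpos (le_of_lt (div_pos hcpos hspos)) (by linarith)
      exact_mod_cast this
  have hinner : ∀ w : EuclideanSpace ℝ (Fin n), ⟪w, z⟫ = c / s * ⟪w, y⟫ := by
    intro w
    rw [hzdef, real_inner_smul_right]
  have hxz : ⟪x, z⟫ = c + c / s := by
    rw [hinner x]
    have : ⟪x, y⟫ = s + 1 := by rw [hsdef]; ring
    rw [this]
    field_simp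
  refine ⟨?_, ?_, ?_⟩
  · intro w
    have h1 : ⟪w - x, z⟫ = c / s * (⟪w, y⟫ - 1) - c := by
      rw [inner_sub_left, hinner w, hinner x]
      have : ⟪x, y⟫ = s + 1 := by rw [hsdef]; ring
      rw [this]
      field_simp
      ring
    rw [h1, hφxc, ← EReal.coe_add]
    have : c + (c / s * (⟪w, y⟫ - 1) - c) = c / s * (⟪w, y⟫ - 1) := by ring
    rw [this]
    exact key w
  · rw [hxz, hφxc]
    intro h
    have : c + c / s = c := by exact_mod_cast h
    have := div_pos hcpos hspos
    linarith
  · rw [hxz]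
    have : c + c / s - c = c / s := by ring
    rw [this, hzdef, smul_smul, inv_mul_cancel₀ (by positivity), one_smul]
end
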